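/- arXiv:1604.05060 — 2 statements merged into one kernel-verified Lean document; each statement's English description precedes it below -/
import Mathlib

section
/- Let p, q be unit quaternions and let Z = (U,V) and Z' = (U',V') be tangent vectors to S³×S³ at (p,q). Then ⟨Z, Q(Z')⟩ = (√3/2)·g(Z, P(J(Z'))), where ⟨Z,W⟩ denotes the Euclidean product inner product (sum of the componentwise quaternionic Euclidean inner products) and Q(U,V) = (−U, V). -/
open Quaternion

noncomputable section

/-- Euclidean inner product on ℍ ≅ ℝ⁴: ⟨a,b⟩ = Re(a · conj b). -/
def innQ (a b : ℍ[ℝ]) : ℝ := (a * star b).re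

/-- Euclidean product inner product on ℍ × ℍ. -/
def innP (Z Z' : ℍ[ℝ] × ℍ[ℝ]) : ℝ := innQ Z.1 Z'.1 + innQ Z.2 Z'.2

/-- Tangency to S³ × S³ at (p,q). -/
def Tangent (p q : ℍ[ℝ]) (Z : ℍ[ℝ] × ℍ[ℝ]) : Prop :=
  (p⁻¹ * Z.1).re = 0 ∧ (q⁻¹ * Z.2).re = 0

/-- The almost complex structure J of the nearly Kähler S³×S³ at the point (p,q). -/
def Jmap (p q : ℍ[ℝ]) (Z : ℍ[ℝ] × ℍ[ℝ]) : ℍ[ℝ] × ℍ[ℝ] :=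
  (Real.sqrt 3)⁻¹ •
    ((2 * (p * q⁻¹ * Z.2) - Z.1, -(2 * (q * p⁻¹ * Z.1)) + Z.2) : ℍ[ℝ] × ℍ[ℝ])

/-- The nearly Kähler metric g at the point (p,q). -/
def gmet (p q : ℍ[ℝ]) (Z Z' : ℍ[ℝ] × ℍ[ℝ]) : ℝ :=
  (4/3) * (innQ Z.1 Z'.1 + innQ Z.2 Z'.2)
    - (2/3) * (innQ (p⁻¹ * Z.1) (q⁻¹ * Z'.2) + innQ (p⁻¹ * Z'.1) (q⁻¹ * Z.2))

/-- The almost product structure P at the point (p,q). -/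
def Pmap (p q : ℍ[ℝ]) (Z : ℍ[ℝ] × ℍ[ℝ]) : ℍ[ℝ] × ℍ[ℝ] :=
  (p * q⁻¹ * Z.2, q * p⁻¹ * Z.1)

/-- The usual product structure Q. -/
def Qmap (Z : ℍ[ℝ] × ℍ[ℝ]) : ℍ[ℝ] × ℍ[ℝ] := (-Z.1, Z.2)

/-- The quaternion units i, j, k. -/
def qi : ℍ[ℝ] := ⟨0, 1, 0, 0⟩
def qj : ℍ[ℝ] := ⟨0, 0, 1, 0⟩
def qk : ℍ[ℝ] := ⟨0, 0, 0, 1⟩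


/- ——— auxiliary lemmas for stmt_11 ——— -/

lemma s11_innQ_def' (a b : ℍ[ℝ]) :
    innQ a b = a.re*b.re + a.imI*b.imI + a.imJ*b.imJ + a.imK*b.imK := by
  simp [innQ, Quaternion.re_mul]

lemma s11_re_mul_comm (a b : ℍ[ℝ]) : (a*b).re = (b*a).re := by
  simp [Quaternion.re_mul]; ring

lemma s11_innQ_right_move (c a b : ℍ[ℝ]) : innQ a (c*b) = innQ (star c * a) b := by
  unfold innQ
  rw [star_mul, ← mul_assoc, s11_re_mul_comm, ← mul_assoc]

lemma s11_innQ_left_move (c a b : ℍ[ℝ]) : innQ (c*a) b = innQ a (star c * b) := by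
  rw [s11_innQ_right_move, star_star]

lemma s11_innQ_symm (a b : ℍ[ℝ]) : innQ a b = innQ b a := by
  rw [s11_innQ_def', s11_innQ_def']; ring

lemma s11_innQ_add_right (a b c : ℍ[ℝ]) : innQ a (b + c) = innQ a b + innQ a c := by
  simp [s11_innQ_def']; ring

lemma s11_innQ_sub_right (a b c : ℍ[ℝ]) : innQ a (b - c) = innQ a b - innQ a c := by
  simp [s11_innQ_def']; ring

lemma s11_innQ_neg_right (a b : ℍ[ℝ]) : innQ a (-b) = -innQ a b := by
  simp [s11_innQ_def']; ring

lemma s11_innQ_two_mul_right (a b : ℍ[ℝ]) : innQ a (2 * b) = 2 * innQ a b := by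
  rw [two_mul, s11_innQ_add_right]; ring

lemma s11_innQ_smul_right (r : ℝ) (a b : ℍ[ℝ]) : innQ a (r • b) = r * innQ a b := by
  simp [s11_innQ_def']; ring

lemma s11_innQ_smul_left (r : ℝ) (a b : ℍ[ℝ]) : innQ (r • a) b = r * innQ a b := by
  simp [s11_innQ_def']; ring

lemma s11_innQ_unit (c a b : ℍ[ℝ]) (hc : star c * c = 1) :
    innQ (c * a) (c * b) = innQ a b := by
  rw [s11_innQ_left_move, ← mul_assoc, hc, one_mul]

/-- ⟨Z, QZ'⟩ = (√3/2) g(Z, PJZ'). -/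
theorem stmt_11 (p q : ℍ[ℝ]) (hp : ‖p‖ = 1) (hq : ‖q‖ = 1)
    (Z Z' : ℍ[ℝ] × ℍ[ℝ]) (hZ : Tangent p q Z) (hZ' : Tangent p q Z') :
    innP Z (Qmap Z') = (Real.sqrt 3 / 2) * gmet p q Z (Pmap p q (Jmap p q Z')) := by
  obtain ⟨U, V⟩ := Z
  obtain ⟨U', V'⟩ := Z'
  have hp1 : star p * p = 1 := by
    rw [Quaternion.star_mul_self]; norm_cast
    rw [Quaternion.normSq_eq_norm_mul_self, hp]; norm_num
  have hq1 : star q * q = 1 := by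
    rw [Quaternion.star_mul_self]; norm_cast
    rw [Quaternion.normSq_eq_norm_mul_self, hq]; norm_num
  have hp2 : p * star p = 1 := by
    rw [Quaternion.self_mul_star]; norm_cast
    rw [Quaternion.normSq_eq_norm_mul_self, hp]; norm_num
  have hq2 : q * star q = 1 := by
    rw [Quaternion.self_mul_star]; norm_cast
    rw [Quaternion.normSq_eq_norm_mul_self, hq]; norm_num
  have hps : p⁻¹ = star p := inv_eq_of_mul_eq_one_left hp1
  have hqs : q⁻¹ = star q := inv_eq_of_mul_eq_one_left hq1
  have hc1 : star (q * star p) * (q * star p) = 1 := by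
    rw [star_mul, star_star, mul_assoc, ← mul_assoc (star q) q (star p), hq1, one_mul, hp2]
  have hc2 : star (p * star q) * (p * star q) = 1 := by
    rw [star_mul, star_star, mul_assoc, ← mul_assoc (star p) p (star q), hp1, one_mul, hq2]
  have hc3 : star (star p) * star p = 1 := by rw [star_star, hp2]
  have hc4 : star (star q) * star q = 1 := by rw [star_star, hq2]
  set J1 : ℍ[ℝ] := 2 * (p * star q * V') - U' with hJ1
  set J2 : ℍ[ℝ] := -(2 * (q * star p * U')) + V' with hJ2
  -- Step 1: P(J Z')
  have hPJ : Pmap p q (Jmap p q (U', V'))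
      = (Real.sqrt 3)⁻¹ • ((p * star q * J2, q * star p * J1) : ℍ[ℝ] × ℍ[ℝ]) := by
    simp only [Pmap, Jmap, hps, hqs, Prod.smul_fst, Prod.smul_snd, mul_smul_comm,
      Prod.smul_mk, hJ1, hJ2]
  -- the four inner-product computations
  have e1 : innQ U (p * star q * J2)
      = -(2 * innQ U U') + innQ (star p * U) (star q * V') := by
    rw [hJ2, s11_innQ_right_move, star_mul, star_star]
    rw [s11_innQ_add_right, s11_innQ_neg_right, s11_innQ_two_mul_right]
    rw [s11_innQ_unit _ _ _ hc1]
    rw [mul_assoc q (star p) U, s11_innQ_left_move q]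
  have e2 : innQ V (q * star p * J1)
      = 2 * innQ V V' - innQ (star p * U') (star q * V) := by
    rw [hJ1, s11_innQ_right_move, star_mul, star_star]
    rw [s11_innQ_sub_right, s11_innQ_two_mul_right]
    rw [s11_innQ_unit _ _ _ hc2]
    rw [mul_assoc p (star q) V, s11_innQ_left_move p]
    rw [s11_innQ_symm (star q * V)]
  have e3 : innQ (star p * U) (star q * (q * star p * J1))
      = 2 * innQ (star p * U) (star q * V') - innQ U U' := by
    have h1 : star q * (q * star p * J1) = star p * J1 := by
      rw [mul_assoc q (star p) J1, ← mul_assoc (star q) q (star p * J1), hq1, one_mul]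
    rw [h1, s11_innQ_unit _ _ _ hc3]
    rw [hJ1, s11_innQ_sub_right, s11_innQ_two_mul_right]
    rw [mul_assoc p (star q) V', s11_innQ_right_move p]
  have e4 : innQ (star p * (p * star q * J2)) (star q * V)
      = innQ V V' - 2 * innQ (star p * U') (star q * V) := by
    have h1 : star p * (p * star q * J2) = star q * J2 := by
      rw [mul_assoc p (star q) J2, ← mul_assoc (star p) p (star q * J2), hp1, one_mul]
    rw [h1, s11_innQ_unit _ _ _ hc4]
    rw [s11_innQ_symm]
    rw [hJ2, s11_innQ_add_right, s11_innQ_neg_right, s11_innQ_two_mul_right]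
    rw [mul_assoc q (star p) U', s11_innQ_right_move q]
    rw [s11_innQ_symm (star q * V)]
    ring
  -- Step 2: the metric value
  have key : gmet p q (U, V) (Pmap p q (Jmap p q (U', V')))
      = (Real.sqrt 3)⁻¹ * (2 * innQ V V' - 2 * innQ U U') := by
    rw [hPJ]
    simp only [gmet, hps, hqs, Prod.smul_fst, Prod.smul_snd, mul_smul_comm,
      s11_innQ_smul_right, s11_innQ_smul_left]
    rw [e1, e2, e3, e4]
    ring
  rw [key]
  have h3 : Real.sqrt 3 ≠ 0 := by positivity
  have h33 : Real.sqrt 3 * Real.sqrt 3 = 3 := Real.mul_self_sqrt (by norm_num)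
  have lhs : innP (U, V) (Qmap (U', V')) = innQ V V' - innQ U U' := by
    simp only [innP, Qmap, s11_innQ_neg_right]
    ring
  rw [lhs]
  rw [div_mul_eq_mul_div, ← mul_assoc, mul_inv_cancel₀ h3, one_mul]
  ring
end
end

section
/- Let u be a unit quaternion. Consider the point (u, 1) ∈ S³×S³ (the image of the immersion f : S³ → S³×S³, f(u) = (u,1)), whose tangent image consists of the vectors Z = (U, 0) with Re(u⁻¹U) = 0. Then: (i) for all such Z = (U,0) and Z' = (U',0), g(Z', J(Z)) = 0, i.e. the immersion is Lagrangian; (ii) P(Z) = −(1/2)·Z − (√3/2)·J(Z) for every such Z, i.e. all three angle functions of this Lagrangian immersion satisfy 2θ = 4π/3. Here J, g, and P are evaluated at the point (u,1). -/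
open Quaternion

noncomputable section

lemma re_mul_comm' (a b : ℍ[ℝ]) : (a * b).re = (b * a).re := by
  simp [Quaternion.re_mul]; ring

/-- the immersion u ↦ (u,1) is Lagrangian with all angle functions
satisfying 2θ = 4π/3, i.e. P = -(1/2)·id - (√3/2)·J on its tangent space. -/
theorem stmt_13 (u : ℍ[ℝ]) (hu : ‖u‖ = 1) :
    (∀ U U' : ℍ[ℝ], (u⁻¹ * U).re = 0 → (u⁻¹ * U').re = 0 →
      gmet u 1 (U', 0) (Jmap u 1 (U, 0)) = 0) ∧
    (∀ U : ℍ[ℝ], (u⁻¹ * U).re = 0 →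
      Pmap u 1 (U, 0) =
        -((1/2 : ℝ) • ((U, 0) : ℍ[ℝ] × ℍ[ℝ])) - (Real.sqrt 3 / 2) • Jmap u 1 (U, 0)) := by
  have h3 : Real.sqrt 3 ≠ 0 := by positivity
  have hnorm : Quaternion.normSq u = 1 := by
    have := Quaternion.normSq_eq_norm_mul_self (a := u)
    rw [this, hu]; norm_num
  have huu : u * star u = 1 := by
    rw [Quaternion.self_mul_star, hnorm]; simp
  have huu' : star u * u = 1 := by
    rw [Quaternion.star_mul_self, hnorm]; simp
  have hinv : u⁻¹ = star u := inv_eq_of_mul_eq_one_right huu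
  have conjre : ∀ x : ℍ[ℝ], (star u * x * u).re = x.re := by
    intro x
    rw [re_mul_comm', ← mul_assoc, huu, one_mul]
  have key : ∀ a b : ℍ[ℝ], innQ (star u * a) (star u * b) = innQ a b := by
    intro a b
    unfold innQ
    rw [star_mul, star_star]
    have h : star u * a * (star b * u) = star u * (a * star b) * u := by
      noncomm_ring
    rw [h, conjre]
  constructor
  · intro U U' _ _
    have hJ : Jmap u 1 (U, 0) =
        ((Real.sqrt 3)⁻¹ • (-U), (Real.sqrt 3)⁻¹ • (-(2 * (star u * U)))) := by
      simp [Jmap, hinv, Prod.smul_def]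
    rw [hJ]
    simp only [gmet]
    have e0 : ∀ a : ℍ[ℝ], innQ a 0 = 0 := by intro a; simp [innQ]
    have esmul : ∀ (r : ℝ) (a b : ℍ[ℝ]), innQ a (r • b) = r * innQ a b := by
      intro r a b; simp [innQ, Quaternion.re_smul]
    have eneg : ∀ a b : ℍ[ℝ], innQ a (-b) = - innQ a b := by
      intro a b; simp [innQ]
    have e0' : ∀ a : ℍ[ℝ], innQ 0 a = 0 := by intro a; simp [innQ]
    have etwo : ∀ a b : ℍ[ℝ], innQ a (2 * b) = 2 * innQ a b := by
      intro a b
      have h2 : (2 : ℍ[ℝ]) * b = (2 : ℝ) • b := by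
        rw [← Quaternion.coe_mul_eq_smul]; norm_cast
      rw [h2, esmul]
    simp only [hinv, e0, e0', esmul, eneg, etwo, mul_zero, one_mul, inv_one]
    rw [key]
    ring
  · intro U _
    have hs : Real.sqrt 3 / 2 * (Real.sqrt 3)⁻¹ = 1/2 := by
      field_simp
    have hJ : Jmap u 1 (U, 0) =
        ((Real.sqrt 3)⁻¹ • (-U), (Real.sqrt 3)⁻¹ • (-(2 * (star u * U)))) := by
      simp [Jmap, hinv, Prod.smul_def]
    rw [hJ]
    simp only [Pmap, hinv, inv_one, mul_zero, one_mul, mul_one]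
    apply Prod.ext
    · simp only [Prod.smul_def, Prod.fst_sub, Prod.fst_neg, smul_neg, smul_smul, hs]
      module
    · simp only [Prod.smul_def, Prod.snd_sub, Prod.snd_neg, smul_neg, smul_smul, hs,
        smul_zero, neg_zero, zero_sub, neg_neg]
      have h2 : (2 : ℍ[ℝ]) * (star u * U) = (2 : ℝ) • (star u * U) := by
        rw [← Quaternion.coe_mul_eq_smul]; norm_cast
      rw [h2, smul_smul]
      norm_num
end
end
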